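/- Let $X$ be a random variable taking at most $K$ distinct real values. Then the distribution of $X$ is uniquely determined by its first $2K-1$ moments $\mathbb{E}X,\dots,\mathbb{E}X^{2K-1}$: if $Y$ also takes at most $K$ distinct values and $\mathbb{E}X^l=\mathbb{E}Y^l$ for $l=1,\dots,2K-1$, then $X$ and $Y$ have the same distribution. -/
import Mathlib


open MeasureTheory

namespace Stmt10Aux

lemma integrable_dirac' {f : ℝ → ℝ} (hf : StronglyMeasurable f) (a : ℝ) :
    Integrable f (Measure.dirac a) := by
  refine ⟨hf.aestronglyMeasurable, ?_⟩
  simp [HasFiniteIntegral, lintegral_dirac]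

lemma meas_eq_sum (T : Finset ℝ) (μ : Measure ℝ) (h : μ ((↑T : Set ℝ))ᶜ = 0) :
    μ = ∑ t ∈ T, μ {t} • Measure.dirac t := by
  classical
  ext A hA
  rw [Measure.finset_sum_apply]
  have h1 : μ A = μ (A ∩ (↑T : Set ℝ)) := by
    have h2 := measure_inter_add_diff (μ := μ) A T.measurableSet
    have h3 : μ (A \ (↑T : Set ℝ)) = 0 :=
      measure_mono_null (Set.diff_subset_compl _ _) h
    rw [h3, add_zero] at h2
    exact h2.symm
  have h4 : A ∩ (↑T : Set ℝ) = ↑(T.filter (fun t => t ∈ A)) := by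
    ext x; simp [and_comm]
  have h5 : ∀ s : Finset ℝ, μ (↑s) = ∑ t ∈ s, μ {t} := by
    intro s
    have hs : (↑s : Set ℝ) = ⋃ t ∈ s, {t} := by ext x; simp
    rw [hs, measure_biUnion_finset ?_ (fun t _ => measurableSet_singleton t)]
    intro i _ j _ hij
    simp [Function.onFun, Set.disjoint_singleton, hij]
  rw [h1, h4, h5, Finset.sum_filter]
  refine Finset.sum_congr rfl fun t _ => ?_
  rw [Measure.smul_apply, Measure.dirac_apply' t hA, smul_eq_mul,
    Set.indicator_apply]
  by_cases h : t ∈ A <;> simp [h]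

lemma integral_sum_dirac (T : Finset ℝ) (c : ℝ → ENNReal) (hc : ∀ t, c t ≠ ⊤)
    {f : ℝ → ℝ} (hf : StronglyMeasurable f) :
    ∫ x, f x ∂(∑ t ∈ T, c t • Measure.dirac t) = ∑ t ∈ T, (c t).toReal * f t := by
  rw [integral_finset_sum_measure (fun t _ => (integrable_dirac' hf t).smul_measure (hc t))]
  refine Finset.sum_congr rfl fun t _ => ?_
  rw [integral_smul_measure, integral_dirac, smul_eq_mul]

end Stmt10Aux

/-- a random variable taking at most `K` distinct real values is
determined in distribution by its first `2K-1` moments. -/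
theorem stmt10 {Ω Ω' : Type*} [MeasurableSpace Ω] [MeasurableSpace Ω']
    (μ : Measure Ω) (ν : Measure Ω')
    [IsProbabilityMeasure μ] [IsProbabilityMeasure ν]
    (X : Ω → ℝ) (Y : Ω' → ℝ) (hXm : Measurable X) (hYm : Measurable Y)
    (K : ℕ) (hK : 1 ≤ K)
    (hX : ∃ S : Finset ℝ, S.card ≤ K ∧ ∀ ω, X ω ∈ S)
    (hY : ∃ S : Finset ℝ, S.card ≤ K ∧ ∀ ω, Y ω ∈ S)
    (hmom : ∀ l ∈ Finset.Icc 1 (2 * K - 1),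
      ∫ ω, (X ω) ^ l ∂μ = ∫ ω, (Y ω) ^ l ∂ν) :
    Measure.map X μ = Measure.map Y ν := by
  classical
  obtain ⟨SX, hSXc, hSX⟩ := hX
  obtain ⟨SY, hSYc, hSY⟩ := hY
  set T : Finset ℝ := SX ∪ SY with hTdef
  have hTcard : T.card ≤ 2 * K :=
    le_trans (Finset.card_union_le _ _) (by omega)
  -- Ω is nonempty
  have hΩ : Nonempty Ω := by
    rcases isEmpty_or_nonempty Ω with h | h
    · exfalso
      have h1 : μ Set.univ = 1 := measure_univ
      rw [Set.univ_eq_empty_iff.mpr h, measure_empty] at h1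
      exact zero_ne_one h1
    · exact h
  have hTne : T.Nonempty := ⟨X (Classical.arbitrary Ω),
    Finset.mem_union_left _ (hSX _)⟩
  set μX : Measure ℝ := μ.map X with hμXdef
  set νY : Measure ℝ := ν.map Y with hνYdef
  haveI : IsProbabilityMeasure μX := Measure.isProbabilityMeasure_map hXm.aemeasurable
  haveI : IsProbabilityMeasure νY := Measure.isProbabilityMeasure_map hYm.aemeasurable
  have hXconc : μX ((↑T : Set ℝ))ᶜ = 0 := by
    rw [hμXdef, Measure.map_apply hXm T.measurableSet.compl]
    have : X ⁻¹' ((↑T : Set ℝ))ᶜ = ∅ := by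
      ext ω
      simp only [Set.mem_preimage, Set.mem_compl_iff, Set.mem_empty_iff_false,
        iff_false, not_not]
      exact Finset.mem_union_left _ (hSX ω)
    rw [this, measure_empty]
  have hYconc : νY ((↑T : Set ℝ))ᶜ = 0 := by
    rw [hνYdef, Measure.map_apply hYm T.measurableSet.compl]
    have : Y ⁻¹' ((↑T : Set ℝ))ᶜ = ∅ := by
      ext ω
      simp only [Set.mem_preimage, Set.mem_compl_iff, Set.mem_empty_iff_false,
        iff_false, not_not]
      exact Finset.mem_union_right _ (hSY ω)
    rw [this, measure_empty]
  have hXsum : μX = ∑ t ∈ T, μX {t} • Measure.dirac t :=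
    Stmt10Aux.meas_eq_sum T μX hXconc
  have hYsum : νY = ∑ t ∈ T, νY {t} • Measure.dirac t :=
    Stmt10Aux.meas_eq_sum T νY hYconc
  set a : ℝ → ℝ := fun t => (μX {t}).toReal with ha_def
  set b : ℝ → ℝ := fun t => (νY {t}).toReal with hb_def
  -- moment integrals as finite sums
  have hMX : ∀ l : ℕ, ∫ x, x ^ l ∂μX = ∑ t ∈ T, a t * t ^ l := by
    intro l
    rw [hXsum]
    exact Stmt10Aux.integral_sum_dirac T _ (fun t => measure_ne_top _ _)
      (continuous_pow l).stronglyMeasurable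
  have hMY : ∀ l : ℕ, ∫ x, x ^ l ∂νY = ∑ t ∈ T, b t * t ^ l := by
    intro l
    rw [hYsum]
    exact Stmt10Aux.integral_sum_dirac T _ (fun t => measure_ne_top _ _)
      (continuous_pow l).stronglyMeasurable
  -- equality of moment sums for all i ≤ 2K - 1
  have hmm : ∀ i : ℕ, i ≤ 2 * K - 1 →
      ∑ t ∈ T, a t * t ^ i = ∑ t ∈ T, b t * t ^ i := by
    intro i hi
    rcases Nat.eq_zero_or_pos i with rfl | hpos
    · have h1 : ∫ x, x ^ 0 ∂μX = 1 := by simp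
      have h2 : ∫ x, x ^ 0 ∂νY = 1 := by simp
      rw [← hMX 0, ← hMY 0, h1, h2]
    · have hXi : ∫ x, x ^ i ∂μX = ∫ ω, (X ω) ^ i ∂μ := by
        rw [hμXdef]
        exact integral_map hXm.aemeasurable
          (continuous_pow i).stronglyMeasurable.aestronglyMeasurable
      have hYi : ∫ x, x ^ i ∂νY = ∫ ω, (Y ω) ^ i ∂ν := by
        rw [hνYdef]
        exact integral_map hYm.aemeasurable
          (continuous_pow i).stronglyMeasurable.aestronglyMeasurable
      rw [← hMX i, ← hMY i, hXi, hYi]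
      exact hmom i (Finset.mem_Icc.mpr ⟨hpos, hi⟩)
  -- equality of integrals of polynomials of degree ≤ 2K-1
  have hpoly : ∀ p : Polynomial ℝ, p.natDegree ≤ 2 * K - 1 →
      ∑ t ∈ T, a t * p.eval t = ∑ t ∈ T, b t * p.eval t := by
    intro p hp
    have hexp : ∀ c : ℝ → ℝ, ∑ t ∈ T, c t * p.eval t
        = ∑ i ∈ Finset.range (p.natDegree + 1), p.coeff i * ∑ t ∈ T, c t * t ^ i := by
      intro c
      calc ∑ t ∈ T, c t * p.eval t
          = ∑ t ∈ T, ∑ i ∈ Finset.range (p.natDegree + 1), c t * (p.coeff i * t ^ i) := by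
            refine Finset.sum_congr rfl fun t _ => ?_
            rw [Polynomial.eval_eq_sum_range, Finset.mul_sum]
        _ = ∑ i ∈ Finset.range (p.natDegree + 1), ∑ t ∈ T, c t * (p.coeff i * t ^ i) :=
            Finset.sum_comm
        _ = ∑ i ∈ Finset.range (p.natDegree + 1), p.coeff i * ∑ t ∈ T, c t * t ^ i := by
            refine Finset.sum_congr rfl fun i _ => ?_
            rw [Finset.mul_sum]
            exact Finset.sum_congr rfl fun t _ => by ring
    rw [hexp a, hexp b]
    refine Finset.sum_congr rfl fun i hi => ?_
    have hile : i ≤ 2 * K - 1 := by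
      have := Finset.mem_range.mp hi
      omega
    rw [hmm i hile]
  -- pointwise equality of masses
  have hinj : Set.InjOn (id : ℝ → ℝ) ↑T := Function.injective_id.injOn
  have hpoint : ∀ t ∈ T, μX {t} = νY {t} := by
    intro t ht
    set p := Lagrange.basis T (id : ℝ → ℝ) t with hp_def
    have hdeg : p.natDegree ≤ 2 * K - 1 := by
      rw [hp_def, Lagrange.natDegree_basis hinj ht]
      omega
    have heval : ∀ s ∈ T, p.eval s = if s = t then 1 else 0 := by
      intro s hs
      by_cases h : s = t
      · subst h
        simpa using Lagrange.eval_basis_self hinj hs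
      · have h' : t ≠ s := fun h'' => h h''.symm
        rw [if_neg h, hp_def]
        simpa using Lagrange.eval_basis_of_ne (v := (id : ℝ → ℝ)) h' hs
    have key := hpoly p hdeg
    have hA : ∑ s ∈ T, a s * p.eval s = a t := by
      rw [Finset.sum_congr rfl fun s hs => by rw [heval s hs]]
      simp [mul_ite, Finset.sum_ite_eq', ht]
    have hB : ∑ s ∈ T, b s * p.eval s = b t := by
      rw [Finset.sum_congr rfl fun s hs => by rw [heval s hs]]
      simp [mul_ite, Finset.sum_ite_eq', ht]
    have hab : a t = b t := by rw [← hA, key, hB]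
    exact (ENNReal.toReal_eq_toReal_iff' (measure_ne_top _ _) (measure_ne_top _ _)).mp hab
  show μX = νY
  rw [hXsum, hYsum]
  exact Finset.sum_congr rfl fun t ht => by rw [hpoint t ht]
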